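/- arXiv:1905.11028 — 2 statements merged into one kernel-verified Lean document; each statement's English description precedes it below -/
import Mathlib

section
/- Suppose the distribution P on X × {-1,1} has noise exponent α ∈ (0,∞), i.e. P_X({x : |2η(x)-1| ≤ h}) ≤ c_α h^α for all h ≥ 0 and some c_α > 0. Then there exists a constant V > 0 (depending on α and c_α) such that for every measurable g : X → {-1,1}, E[(L∘g - L∘f*)²] ≤ V (E[L∘g - L∘f*])^{α/(1+α)}, where L is the classification loss and f* the Bayes classifier. -/
open MeasureTheory

/-- Variance bound under Tsybakov's noise condition.  If `P` has noise exponent `α`, i.e.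
`P_X {x : |2η x - 1| ≤ h} ≤ c_α h^α` for all `h ≥ 0`, then there is `V > 0` such that for
every `{-1,1}`-valued classifier `g`,
`E[(L∘g - L∘f*)²] ≤ V * (E[L∘g - L∘f*])^(α/(1+α))`.
Here, using the classification loss identities, `E[(L∘g - L∘f*)²] = (1/2)∫|g - f*| dP_X`
and `E[L∘g - L∘f*] = R(g) - R(f*)` is the excess classification risk. -/
theorem variance_bound {X : Type*} [MeasurableSpace X]
    (μ : Measure X) [IsProbabilityMeasure μ]
    (η : X → ℝ) (hη : Measurable η) (hη01 : ∀ x, η x ∈ Set.Icc (0:ℝ) 1)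
    (fstar : X → ℝ) (hfstar : fstar = fun x => if 0 ≤ 2 * η x - 1 then 1 else -1)
    (α : ℝ) (hα : 0 < α) (cα : ℝ) (hcα : 0 < cα)
    (hnoise : ∀ h : ℝ, 0 ≤ h →
      (μ {x | |2 * η x - 1| ≤ h}).toReal ≤ cα * h ^ α) :
    ∃ V : ℝ, 0 < V ∧ ∀ g : X → ℝ, Measurable g → (∀ x, g x = 1 ∨ g x = -1) →
      (1 / 2) * ∫ x, |g x - fstar x| ∂μ
        ≤ V * ((∫ x, (if g x = 1 then 1 - η x else η x) ∂μ)
              - (∫ x, (if fstar x = 1 then 1 - η x else η x) ∂μ)) ^ (α / (1 + α)) := by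
  refine ⟨1 + cα, by linarith, ?_⟩
  intro g hg hg1
  have h1α : (0:ℝ) < 1 + α := by linarith
  -- basic notations
  set φ : X → ℝ := fun x => |2 * η x - 1| with hφdef
  set D : X → ℝ := fun x => |g x - fstar x| with hDdef
  have hφm : Measurable φ := (by
    exact ((measurable_const.mul hη).sub measurable_const).abs)
  have hfm : Measurable fstar := by
    rw [hfstar]
    exact Measurable.ite (measurableSet_le measurable_const
      ((measurable_const.mul hη).sub measurable_const)) measurable_const measurable_const
  have hDm : Measurable D := (hg.sub hfm).abs
  have hDb : ∀ x, |D x| ≤ 2 := by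
    intro x
    have h1 := hg1 x
    have h2 : fstar x = 1 ∨ fstar x = -1 := by
      rw [hfstar]; by_cases h : 0 ≤ 2 * η x - 1 <;> simp [h]
    rcases h1 with h1 | h1 <;> rcases h2 with h2 | h2 <;> simp [hDdef, h1, h2] <;> norm_num
  have hφb : ∀ x, |φ x| ≤ 1 := by
    intro x
    have := (hη01 x).1; have := (hη01 x).2
    rw [hφdef]; simp only [abs_abs]
    rw [abs_le]; constructor <;> linarith
  have int_of_bdd : ∀ (f : X → ℝ) (C : ℝ), Measurable f → (∀ x, |f x| ≤ C) →
      Integrable f μ := fun f C hf hb =>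
    (integrable_const C).mono' hf.aestronglyMeasurable (ae_of_all _ hb)
  have hDint : Integrable D μ := int_of_bdd D 2 hDm hDb
  have hφDint : Integrable (fun x => φ x * D x) μ := by
    refine int_of_bdd _ 2 (hφm.mul hDm) fun x => ?_
    calc |φ x * D x| = |φ x| * |D x| := abs_mul _ _
      _ ≤ 1 * 2 := mul_le_mul (hφb x) (hDb x) (abs_nonneg _) zero_le_one
      _ = 2 := by norm_num
  -- the excess risk E
  set E : ℝ := (∫ x, (if g x = 1 then 1 - η x else η x) ∂μ)
              - (∫ x, (if fstar x = 1 then 1 - η x else η x) ∂μ) with hEdef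
  -- pointwise identity
  have key : ∀ x, (if g x = 1 then 1 - η x else η x) - (if fstar x = 1 then 1 - η x else η x)
      = φ x * D x / 2 := by
    intro x
    by_cases hs : 0 ≤ 2 * η x - 1
    · have hfx : fstar x = 1 := by rw [hfstar]; simp [hs]
      have hφx : φ x = 2 * η x - 1 := abs_of_nonneg hs
      rcases hg1 x with h1 | h1
      · simp [h1, hfx, hDdef, hφx]
      · have : g x ≠ 1 := by rw [h1]; norm_num
        have hD : D x = 2 := by simp [hDdef, h1, hfx]; norm_num
        rw [if_neg this, if_pos hfx, hD, hφx]; ring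
    · have hfx : fstar x = -1 := by rw [hfstar]; simp [hs]
      have hfx1 : fstar x ≠ 1 := by rw [hfx]; norm_num
      have hφx : φ x = -(2 * η x - 1) := abs_of_neg (not_le.mp hs)
      rcases hg1 x with h1 | h1
      · have hD : D x = 2 := by simp [hDdef, h1, hfx]; norm_num
        rw [if_pos h1, if_neg hfx1, hD, hφx]; ring
      · have : g x ≠ 1 := by rw [h1]; norm_num
        have hD : D x = 0 := by simp [hDdef, h1, hfx]
        rw [if_neg this, if_neg hfx1, hD]; ring
  -- integrability of the two loss terms
  have hgm1 : Measurable (fun x => if g x = 1 then 1 - η x else η x) := by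
    exact Measurable.ite (hg (measurableSet_singleton 1)) (measurable_const.sub hη) hη
  have hfm1 : Measurable (fun x => if fstar x = 1 then 1 - η x else η x) := by
    exact Measurable.ite (hfm (measurableSet_singleton 1)) (measurable_const.sub hη) hη
  have hbd : ∀ (f : X → ℝ), (∀ x, (if f x = 1 then 1 - η x else η x) = if f x = 1 then 1 - η x else η x) → True := fun _ _ => trivial
  have hbg : ∀ x, |(if g x = 1 then 1 - η x else η x)| ≤ 1 := by
    intro x; have := (hη01 x).1; have := (hη01 x).2
    by_cases h : g x = 1 <;> simp [h, abs_le] <;> constructor <;> linarith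
  have hbf : ∀ x, |(if fstar x = 1 then 1 - η x else η x)| ≤ 1 := by
    intro x; have := (hη01 x).1; have := (hη01 x).2
    by_cases h : fstar x = 1 <;> simp [h, abs_le] <;> constructor <;> linarith
  have hgint : Integrable (fun x => if g x = 1 then 1 - η x else η x) μ :=
    int_of_bdd _ 1 hgm1 hbg
  have hfint : Integrable (fun x => if fstar x = 1 then 1 - η x else η x) μ :=
    int_of_bdd _ 1 hfm1 hbf
  -- E = (1/2) ∫ φ D
  have hE : E = (1/2) * ∫ x, φ x * D x ∂μ := by
    rw [hEdef, ← integral_sub hgint hfint]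
    rw [show (fun x => (if g x = 1 then 1 - η x else η x) - (if fstar x = 1 then 1 - η x else η x))
        = fun x => φ x * D x / 2 from funext key]
    rw [integral_div]; ring
  have hEnn : 0 ≤ E := by
    rw [hE]
    have : 0 ≤ ∫ x, φ x * D x ∂μ :=
      integral_nonneg fun x => mul_nonneg (abs_nonneg _) (abs_nonneg _)
    linarith
  -- the split bound : for all h > 0, (1/2)∫D ≤ cα h^α + E/h
  have split : ∀ h : ℝ, 0 < h → (1/2) * ∫ x, D x ∂μ ≤ cα * h ^ α + E / h := by
    intro h hh
    set S : Set X := {x | φ x ≤ h} with hSdef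
    have hS : MeasurableSet S := measurableSet_le hφm measurable_const
    have pw : ∀ x, D x ≤ S.indicator (fun _ => (2:ℝ)) x + φ x * D x / h := by
      intro x
      have hD0 : 0 ≤ D x := abs_nonneg _
      have hφ0 : 0 ≤ φ x := abs_nonneg _
      by_cases hx : φ x ≤ h
      · have : S.indicator (fun _ => (2:ℝ)) x = 2 := Set.indicator_of_mem (show x ∈ S from hx) _
        rw [this]
        have := (abs_le.mp (hDb x)).2
        have : D x ≤ 2 := by simpa using (abs_le.mp (hDb x)).2
        have h2 : 0 ≤ φ x * D x / h := div_nonneg (mul_nonneg hφ0 hD0) hh.le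
        linarith
      · have : S.indicator (fun _ => (2:ℝ)) x = 0 := Set.indicator_of_notMem (show x ∉ S from hx) _
        rw [this, zero_add]
        rw [le_div_iff₀ hh]
        have hhφ : h ≤ φ x := (not_le.mp hx).le
        calc D x * h ≤ D x * φ x := by
              exact mul_le_mul_of_nonneg_left hhφ hD0
          _ = φ x * D x := mul_comm _ _
    have hindint : Integrable (S.indicator (fun _ => (2:ℝ))) μ :=
      (integrable_const (2:ℝ)).indicator hS
    have hrint : Integrable (fun x => S.indicator (fun _ => (2:ℝ)) x + φ x * D x / h) μ :=
      hindint.add (hφDint.div_const h)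
    have hmono : ∫ x, D x ∂μ ≤ ∫ x, (S.indicator (fun _ => (2:ℝ)) x + φ x * D x / h) ∂μ :=
      integral_mono hDint hrint pw
    have hind : ∫ x, S.indicator (fun _ => (2:ℝ)) x ∂μ = 2 * (μ S).toReal := by
      rw [integral_indicator hS]
      simp [mul_comm]; rfl
    have heq : ∫ x, (S.indicator (fun _ => (2:ℝ)) x + φ x * D x / h) ∂μ
        = 2 * (μ S).toReal + (∫ x, φ x * D x ∂μ) / h := by
      rw [integral_add hindint (hφDint.div_const h), hind, integral_div]
    have hns : (μ S).toReal ≤ cα * h ^ α := hnoise h hh.le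
    have hφDE : (∫ x, φ x * D x ∂μ) = 2 * E := by rw [hE]; ring
    calc (1/2) * ∫ x, D x ∂μ
        ≤ (1/2) * (2 * (μ S).toReal + (∫ x, φ x * D x ∂μ) / h) := by
          rw [← heq]; linarith [hmono]
      _ = (μ S).toReal + (∫ x, φ x * D x ∂μ) / (2*h) := by
          field_simp
      _ ≤ cα * h ^ α + E / h := by
          rw [hφDE]
          have : (2 * E) / (2 * h) = E / h := by
            field_simp
          rw [this]
          linarith
  -- now optimize over h
  have hgoal : (1 / 2) * ∫ x, D x ∂μ ≤ (1 + cα) * E ^ (α / (1 + α)) := by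
    rcases eq_or_lt_of_le hEnn with hE0 | hEpos
    · -- E = 0 : show LHS ≤ 0 and RHS = 0
      have hle : (1/2) * ∫ x, D x ∂μ ≤ 0 := by
        refine le_of_forall_pos_le_add ?_
        intro ε hε
        have hεc : (0:ℝ) < ε / cα := div_pos hε hcα
        have hh : (0:ℝ) < (ε / cα) ^ (1/α : ℝ) := Real.rpow_pos_of_pos hεc _
        have hsp := split _ hh
        have hpow : ((ε / cα) ^ (1/α : ℝ)) ^ α = ε / cα := by
          rw [← Real.rpow_mul hεc.le, one_div_mul_cancel hα.ne', Real.rpow_one]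
        rw [hpow, ← hE0, zero_div, add_zero] at hsp
        rw [mul_div_cancel₀ _ hcα.ne'] at hsp
        linarith
      have hz : E ^ (α / (1 + α)) = 0 := by
        rw [← hE0, Real.zero_rpow (ne_of_gt (div_pos hα h1α))]
      rw [hz, mul_zero]
      exact hle
    · set h : ℝ := E ^ ((1:ℝ)/(1+α)) with hhdef
      have hh : 0 < h := Real.rpow_pos_of_pos hEpos _
      have hsp := split h hh
      have hp1 : h ^ α = E ^ (α / (1 + α)) := by
        rw [hhdef, ← Real.rpow_mul hEpos.le, one_div_mul_eq_div]
      have hp2 : E / h = E ^ (α / (1 + α)) := by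
        rw [hhdef]
        have : E / E ^ ((1:ℝ)/(1+α)) = E ^ (1:ℝ) / E ^ ((1:ℝ)/(1+α)) := by
          rw [Real.rpow_one]
        rw [this, ← Real.rpow_sub hEpos]
        congr 1
        field_simp
        ring
      rw [hp1, hp2] at hsp
      have hpnn : 0 ≤ E ^ (α / (1 + α)) := Real.rpow_nonneg hEnn _
      nlinarith [hsp]
  calc (1 / 2) * ∫ x, |g x - fstar x| ∂μ
      = (1 / 2) * ∫ x, D x ∂μ := rfl
    _ ≤ (1 + cα) * E ^ (α / (1 + α)) := hgoal
end

section
/- Let P be a distribution on X × {-1,1} whose distance to the decision boundary Δ controls the noise with exponent γ (i.e., |2η(x)-1| ≤ c Δ(x)^γ P_X-a.e.) and which has noise exponent α (i.e., P_X(|2η-1| ≤ h) ≤ c_α h^α for all h ≥ 0). Then P has margin-noise exponent β = γ(α+1): there is a constant c_β > 0 such that ∫_{Δ(x) ≤ h} |2η(x)-1| dP_X(x) ≤ c_β h^{γ(α+1)} for all h ≥ 0. -/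
open MeasureTheory Metric

/-- If the distance to the decision boundary controls the noise with exponent `γ`
(`|2η - 1| ≤ c Δ^γ` a.e.) and `P` has noise exponent `α`
(`P_X(|2η - 1| ≤ h) ≤ c_α h^α` for all `h ≥ 0`), then `P` has margin-noise exponent
`β = γ(α+1)`: there is `c_β > 0` with `∫_{Δ ≤ h} |2η - 1| dP_X ≤ c_β h^(γ(α+1))` for all
`h ≥ 0`. -/
theorem margin_noise_exponent {X : Type*} [MetricSpace X] [MeasurableSpace X]
    (μ : Measure X) [IsProbabilityMeasure μ]
    (η : X → ℝ) (hη : Measurable η)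
    (Δ : X → ℝ)
    (hΔ : Δ = fun x => if η x < 1 / 2 then infDist x {z | 1 / 2 < η z}
      else if 1 / 2 < η x then infDist x {z | η z < 1 / 2} else 0)
    (γ : ℝ) (hγ : 0 ≤ γ) (c : ℝ) (hc : 0 < c)
    (hcontrol : ∀ᵐ x ∂μ, |2 * η x - 1| ≤ c * Δ x ^ γ)
    (α : ℝ) (hα : 0 < α) (cα : ℝ) (hcα : 0 < cα)
    (hnoise : ∀ h : ℝ, 0 ≤ h → (μ {x | |2 * η x - 1| ≤ h}).toReal ≤ cα * h ^ α) :
    ∃ cβ : ℝ, 0 < cβ ∧ ∀ h : ℝ, 0 ≤ h →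
      ∫ x in {x | Δ x ≤ h}, |2 * η x - 1| ∂μ ≤ cβ * h ^ (γ * (α + 1)) := by
  have hΔ0 : ∀ x, 0 ≤ Δ x := by
    intro x
    rw [hΔ]
    dsimp only
    split_ifs <;> first | exact infDist_nonneg | exact le_refl 0
  refine ⟨cα * c ^ (α + 1), by positivity, fun h hh => ?_⟩
  set C : ℝ := c * h ^ γ with hCdef
  have hC0 : 0 ≤ C := by positivity
  set A : Set X := {x | Δ x ≤ h} with hAdef
  set B : Set X := {x | |2 * η x - 1| ≤ C} with hBdef
  have hAB : ∀ᵐ x ∂μ, x ∈ A → x ∈ B := by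
    filter_upwards [hcontrol] with x hx hxA
    calc |2 * η x - 1| ≤ c * Δ x ^ γ := hx
      _ ≤ c * h ^ γ := by
          exact mul_le_mul_of_nonneg_left (Real.rpow_le_rpow (hΔ0 x) hxA hγ) hc.le
  have hmono : μ A ≤ μ B := measure_mono_ae hAB
  have key : ‖∫ x in A, |2 * η x - 1| ∂μ‖ ≤ C * (μ A).toReal := by
    refine norm_setIntegral_le_of_norm_le_const_ae' (measure_lt_top μ A) ?_
    filter_upwards [hAB] with x hx hxA
    simpa [abs_abs, hBdef] using hx hxA
  have h1 : ∫ x in A, |2 * η x - 1| ∂μ ≤ C * (μ A).toReal :=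
    le_trans (le_abs_self _) key
  have h2 : (μ A).toReal ≤ (μ B).toReal :=
    ENNReal.toReal_le_toReal (measure_ne_top μ A) (measure_ne_top μ B) |>.mpr hmono
  have h3 : (μ B).toReal ≤ cα * C ^ α := hnoise C hC0
  have h4 : ∫ x in A, |2 * η x - 1| ∂μ ≤ C * (cα * C ^ α) := by
    calc ∫ x in A, |2 * η x - 1| ∂μ ≤ C * (μ A).toReal := h1
      _ ≤ C * (cα * C ^ α) :=
        mul_le_mul_of_nonneg_left (le_trans h2 h3) hC0
  refine h4.trans_eq ?_
  have hCα : C ^ α = c ^ α * h ^ (γ * α) := by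
    rw [hCdef, Real.mul_rpow hc.le (Real.rpow_nonneg hh γ), Real.rpow_mul hh]
  have hcα1 : c ^ (α + 1) = c ^ α * c := Real.rpow_add_one hc.ne' α
  have hhexp : h ^ (γ * (α + 1)) = h ^ (γ * α) * h ^ γ := by
    rw [Real.rpow_mul hh, Real.rpow_add' (Real.rpow_nonneg hh γ) (by positivity),
      Real.rpow_one, ← Real.rpow_mul hh]
  rw [hCα, hcα1, hhexp, hCdef]
  ring
end
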